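/- Let A_1, …, A_n be positive semidefinite real symmetric matrices with A_1 + ⋯ + A_n ⪯ n·I. Then Σ_{i≠j} A_i A_j ⪯ n(n-1)·I. -/

import Mathlib

theorem psd_smul {d : ℕ} {c : ℝ} (hc : 0 ≤ c) {M : Matrix (Fin d) (Fin d) ℝ}
    (hM : M.PosSemidef) : (c • M).PosSemidef := by
  refine ⟨?_, fun x => ?_⟩
  · unfold Matrix.IsHermitian
    rw [Matrix.conjTranspose_smul, hM.1.eq, star_trivial]
  · exact (hM.smul hc).2 x

theorem psd_sum {d n : ℕ} (A : Fin n → Matrix (Fin d) (Fin d) ℝ)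
    (hA : ∀ i, (A i).PosSemidef) : (∑ i, A i).PosSemidef :=
  Finset.sum_induction A _ (fun _ _ ha hb => ha.add hb) Matrix.PosSemidef.zero
    (fun i _ => hA i)

open scoped MatrixOrder in
open Matrix in
theorem stmt5 {d n : ℕ} (A : Fin n → Matrix (Fin d) (Fin d) ℝ)
    (hA : ∀ i, (A i).PosSemidef)
    (hsum : ((n : ℝ) • (1 : Matrix (Fin d) (Fin d) ℝ) - ∑ i, A i).PosSemidef) :
    (((n : ℝ) * ((n : ℝ) - 1)) • (1 : Matrix (Fin d) (Fin d) ℝ) -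
      ∑ p ∈ Finset.univ.filter (fun p : Fin n × Fin n => p.1 ≠ p.2),
        A p.1 * A p.2).PosSemidef := by
  rcases Nat.eq_zero_or_pos n with hn | hn
  · subst hn
    simp only [Nat.cast_zero, zero_mul, zero_smul]
    have : (Finset.univ.filter (fun p : Fin 0 × Fin 0 => p.1 ≠ p.2)) = ∅ := by
      simp [Finset.eq_empty_iff_forall_notMem]
    rw [this]
    simpa using Matrix.PosSemidef.zero
  set S : Matrix (Fin d) (Fin d) ℝ := ∑ i, A i with hSdef
  have hS : S.PosSemidef := psd_sum A hA
  -- rewrite the off-diagonal sum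
  have hsplit : ∑ p ∈ Finset.univ.filter (fun p : Fin n × Fin n => p.1 ≠ p.2),
      A p.1 * A p.2 = S * S - ∑ i, A i * A i := by
    have htot : ∑ p : Fin n × Fin n, A p.1 * A p.2 = S * S := by
      rw [hSdef, Finset.sum_mul_sum]
      exact Fintype.sum_prod_type (f := fun p : Fin n × Fin n => A p.1 * A p.2)
    have hdiag : ∑ p ∈ Finset.univ.filter (fun p : Fin n × Fin n => p.1 = p.2),
        A p.1 * A p.2 = ∑ i, A i * A i := by
      rw [Finset.sum_filter, Fintype.sum_prod_type]
      simp
    have := Finset.sum_filter_add_sum_filter_not Finset.univ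
      (fun p : Fin n × Fin n => p.1 ≠ p.2) (fun p => A p.1 * A p.2)
    simp only [not_ne_iff] at this
    rw [hdiag] at this
    rw [← htot, ← this]
    abel
  rw [hsplit]
  -- the square root of n•1 - S
  set R : Matrix (Fin d) (Fin d) ℝ := CFC.sqrt ((n : ℝ) • 1 - S) with hRdef
  have hRR : R * R = (n : ℝ) • 1 - S := CFC.sqrt_mul_sqrt_self _ hsum.nonneg
  have hRH : Rᴴ = R := (CFC.sqrt_nonneg _).posSemidef.1.eq
  -- X := R * (n•1 + S) * R is PSD and equals n²•1 - S*S
  have hQ : ((n : ℝ) • (1 : Matrix (Fin d) (Fin d) ℝ) + S).PosSemidef :=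
    (psd_smul (by positivity) Matrix.PosSemidef.one).add hS
  have hXpsd : (R * ((n : ℝ) • (1 : Matrix (Fin d) (Fin d) ℝ) + S) * R).PosSemidef := by
    have := hQ.conjTranspose_mul_mul_same R
    rwa [hRH] at this
  have hXeq : R * ((n : ℝ) • (1 : Matrix (Fin d) (Fin d) ℝ) + S) * R
      = ((n : ℝ) ^ 2) • 1 - S * S := by
    have h1 : (n : ℝ) • (1 : Matrix (Fin d) (Fin d) ℝ) + S
        = (2 * (n : ℝ)) • 1 - ((n : ℝ) • 1 - S) := by module
    rw [h1, ← hRR]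
    have h2 : R * ((2 * (n : ℝ)) • 1 - R * R) * R
        = (2 * (n : ℝ)) • (R * R) - (R * R) * (R * R) := by
      simp only [mul_sub, sub_mul, mul_smul_comm, smul_mul_assoc, mul_one, one_mul, mul_assoc]
    rw [h2, hRR]
    have h3 : ((n : ℝ) • (1 : Matrix (Fin d) (Fin d) ℝ) - S) * ((n : ℝ) • 1 - S)
        = ((n : ℝ) ^ 2) • 1 - (n : ℝ) • S - (n : ℝ) • S + S * S := by
      simp only [mul_sub, sub_mul, mul_smul_comm, smul_mul_assoc, mul_one, one_mul]
      module
    rw [h3]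
    module
  -- Σ (n•A i - S)² is PSD
  have hBpsd : (∑ i, ((n : ℝ) • A i - S) * ((n : ℝ) • A i - S)).PosSemidef := by
    apply psd_sum
    intro i
    have hBH : ((n : ℝ) • A i - S)ᴴ = (n : ℝ) • A i - S := by
      rw [Matrix.conjTranspose_sub, Matrix.conjTranspose_smul, (hA i).1.eq, hS.1.eq,
        star_trivial]
    have h := Matrix.posSemidef_conjTranspose_mul_self ((n : ℝ) • A i - S)
    rwa [hBH] at h
  have hBeq : (∑ i, ((n : ℝ) • A i - S) * ((n : ℝ) • A i - S))
      = ((n : ℝ) ^ 2) • (∑ i, A i * A i) - (n : ℝ) • (S * S) := by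
    have hterm : ∀ i, ((n : ℝ) • A i - S) * ((n : ℝ) • A i - S)
        = ((n : ℝ) ^ 2) • (A i * A i) - (n : ℝ) • (A i * S) - (n : ℝ) • (S * A i) + S * S := by
      intro i
      simp only [mul_sub, sub_mul, mul_smul_comm, smul_mul_assoc]
      module
    simp only [hterm]
    rw [Finset.sum_add_distrib, Finset.sum_sub_distrib, Finset.sum_sub_distrib,
      ← Finset.smul_sum, ← Finset.smul_sum, ← Finset.smul_sum,
      ← Finset.sum_mul, ← Finset.mul_sum, ← hSdef, Finset.sum_const, Finset.card_univ,
      Fintype.card_fin, ← Nat.cast_smul_eq_nsmul ℝ n (S * S)]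
    module
  -- assemble: n² • goal-matrix = n(n-1) • X + Σ Bᵢ²
  set T : Matrix (Fin d) (Fin d) ℝ :=
    ((n : ℝ) * ((n : ℝ) - 1)) • 1 - (S * S - ∑ i, A i * A i) with hTdef
  have hkey : ((n : ℝ) ^ 2) • T
      = ((n : ℝ) * ((n : ℝ) - 1)) • (R * ((n : ℝ) • (1 : Matrix (Fin d) (Fin d) ℝ) + S) * R)
        + ∑ i, ((n : ℝ) • A i - S) * ((n : ℝ) • A i - S) := by
    rw [hXeq, hBeq, hTdef]
    module
  have hn2 : (0 : ℝ) < (n : ℝ) ^ 2 := by positivity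
  have hTpsd : (((n : ℝ) ^ 2) • T).PosSemidef := by
    rw [hkey]
    exact (psd_smul (by nlinarith [Nat.one_le_cast (α := ℝ) |>.mpr hn]) hXpsd).add hBpsd
  have : T = ((n : ℝ) ^ 2)⁻¹ • (((n : ℝ) ^ 2) • T) := by
    rw [smul_smul, inv_mul_cancel₀ hn2.ne', one_smul]
  rw [this]
  exact psd_smul (by positivity) hTpsd
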